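/- (Proposition 2 of the paper, after Vidal et al.) For every visit sequence σ, let E(σ) and L(σ) be the unique real numbers such that D_σ(t) = D(σ) + max{E(σ) − t, 0} and TW_σ(t) = TW(σ) + max{t − L(σ), 0} for all t ∈ ℝ. Then E(σ) ≤ L(σ), and the set of start times t that simultaneously minimize both the duration D_σ and the time warp TW_σ is exactly the nonempty segment [E(σ), L(σ)]. -/

import Mathlib

/-- Arrival times of a visit sequence started at time `t`:
`a 0 = t`, `a (k+1) = s k + μ k + δ k` where `s k = min (max (a k) (e k)) (l k)`. -/
noncomputable def arrive (μ e l δ : ℕ → ℝ) (t : ℝ) : ℕ → ℝ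
  | 0 => t
  | k + 1 => min (max (arrive μ e l δ t k) (e k)) (l k) + μ k + δ k

/-- Service start times with time warp. -/
noncomputable def serve (μ e l δ : ℕ → ℝ) (t : ℝ) (k : ℕ) : ℝ :=
  min (max (arrive μ e l δ t k) (e k)) (l k)

/-- Total time warp of a visit sequence of length `n+1` started at time `t`. -/
noncomputable def timeWarp (n : ℕ) (μ e l δ : ℕ → ℝ) (t : ℝ) : ℝ :=
  ∑ k ∈ Finset.range (n + 1), max (arrive μ e l δ t k - l k) 0

/-- Total waiting time of a visit sequence of length `n+1` started at time `t`. -/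
noncomputable def waiting (n : ℕ) (μ e l δ : ℕ → ℝ) (t : ℝ) : ℝ :=
  ∑ k ∈ Finset.range (n + 1), max (e k - arrive μ e l δ t k) 0

/-- Duration of a visit sequence of length `n+1` started at time `t`. -/
noncomputable def duration (n : ℕ) (μ e l δ : ℕ → ℝ) (t : ℝ) : ℝ :=
  (∑ k ∈ Finset.range (n + 1), μ k) + (∑ k ∈ Finset.range n, δ k) +
    waiting n μ e l δ t

lemma clamp_eq (a ee ll : ℝ) (h : ee ≤ ll) :
    min (max a ee) ll = a + max (ee - a) 0 - max (a - ll) 0 := by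
  rcases le_total a ee with h1 | h1 <;> rcases le_total a ll with h2 | h2 <;>
    simp [max_def, min_def] <;> split_ifs <;> linarith

lemma arrive_mono (μ e l δ : ℕ → ℝ) {t u : ℝ} (h : t ≤ u) (k : ℕ) :
    arrive μ e l δ t k ≤ arrive μ e l δ u k := by
  induction k with
  | zero => exact h
  | succ k ih =>
      simp only [arrive]
      exact add_le_add (add_le_add
        (min_le_min (max_le_max ih le_rfl) le_rfl) le_rfl) le_rfl

lemma serve_mono (μ e l δ : ℕ → ℝ) {t u : ℝ} (h : t ≤ u) (k : ℕ) :
    serve μ e l δ t k ≤ serve μ e l δ u k :=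
  min_le_min (max_le_max (arrive_mono μ e l δ h k) le_rfl) le_rfl

lemma key (n : ℕ) (μ e l δ : ℕ → ℝ) (hel : ∀ k ≤ n, e k ≤ l k) (t : ℝ) :
    serve μ e l δ t n + μ n = t + duration n μ e l δ t - timeWarp n μ e l δ t := by
  induction n with
  | zero =>
      have h0 : serve μ e l δ t 0 = t + max (e 0 - t) 0 - max (t - l 0) 0 := by
        simpa [serve, arrive] using clamp_eq t (e 0) (l 0) (hel 0 le_rfl)
      simp only [duration, timeWarp, waiting, zero_add, Finset.sum_range_one,
        Finset.range_zero, Finset.sum_empty]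
      rw [h0]
      have : arrive μ e l δ t 0 = t := rfl
      rw [this]
      ring
  | succ n ih =>
      have hel' : ∀ k ≤ n, e k ≤ l k := fun k hk => hel k (hk.trans (Nat.le_succ n))
      have ha : arrive μ e l δ t (n + 1) = serve μ e l δ t n + μ n + δ n := rfl
      have hdur : duration (n + 1) μ e l δ t =
          duration n μ e l δ t + μ (n + 1) + δ n +
            max (e (n + 1) - arrive μ e l δ t (n + 1)) 0 := by
        simp only [duration, waiting, Finset.sum_range_succ]
        ring
      have htw : timeWarp (n + 1) μ e l δ t =
          timeWarp n μ e l δ t + max (arrive μ e l δ t (n + 1) - l (n + 1)) 0 := by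
        simp only [timeWarp, Finset.sum_range_succ]
      have hs : serve μ e l δ t (n + 1) =
          arrive μ e l δ t (n + 1) + max (e (n + 1) - arrive μ e l δ t (n + 1)) 0 -
            max (arrive μ e l δ t (n + 1) - l (n + 1)) 0 :=
        clamp_eq _ _ _ (hel (n + 1) le_rfl)
      rw [hs, hdur, htw, ha]
      have := ih hel'
      linarith

/-- Proposition 2: E(σ) ≤ L(σ), and the set of start times that simultaneously
minimize both the duration and the time warp is exactly the nonempty segment
[E(σ), L(σ)]. -/
theorem optimal_start_times_segment
    (n : ℕ) (μ e l δ : ℕ → ℝ)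
    (hμ : ∀ k ≤ n, 0 ≤ μ k) (hel : ∀ k ≤ n, e k ≤ l k) (hδ : ∀ k < n, 0 ≤ δ k)
    (Dmin TWmin E L : ℝ)
    (hD : ∀ t : ℝ, duration n μ e l δ t = Dmin + max (E - t) 0)
    (hTW : ∀ t : ℝ, timeWarp n μ e l δ t = TWmin + max (t - L) 0) :
    E ≤ L ∧
    { t : ℝ | (∀ u : ℝ, duration n μ e l δ t ≤ duration n μ e l δ u) ∧
              (∀ u : ℝ, timeWarp n μ e l δ t ≤ timeWarp n μ e l δ u) } =
      Set.Icc E L := by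
  have hEL : E ≤ L := by
    by_contra h
    push_neg at h
    have k1 := key n μ e l δ hel L
    have k2 := key n μ e l δ hel E
    rw [hD L, hTW L, max_eq_right (le_of_eq (sub_self L)), max_eq_left (by linarith : (0:ℝ) ≤ E - L)] at k1
    rw [hD E, hTW E, max_eq_right (by linarith : E - E ≤ (0:ℝ)),
      max_eq_left (by linarith : (0:ℝ) ≤ E - L)] at k2
    have hm := serve_mono μ e l δ (le_of_lt h) n
    linarith
  refine ⟨hEL, ?_⟩
  ext t
  simp only [Set.mem_setOf_eq, Set.mem_Icc]
  constructor
  · rintro ⟨h1, h2⟩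
    constructor
    · have := h1 E
      rw [hD t, hD E, max_eq_right (by linarith : E - E ≤ (0:ℝ))] at this
      have h0 : max (E - t) 0 ≤ 0 := by linarith
      have := le_max_left (E - t) 0
      nlinarith [le_max_right (E - t) (0:ℝ)]
    · have := h2 L
      rw [hTW t, hTW L, max_eq_right (by linarith : L - L ≤ (0:ℝ))] at this
      have h0 : max (t - L) 0 ≤ 0 := by linarith
      have := le_max_left (t - L) (0:ℝ)
      linarith
  · rintro ⟨h1, h2⟩
    constructor
    · intro u
      rw [hD t, hD u, max_eq_right (by linarith : E - t ≤ (0:ℝ))]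
      have := le_max_right (E - u) (0:ℝ)
      linarith
    · intro u
      rw [hTW t, hTW u, max_eq_right (by linarith : t - L ≤ (0:ℝ))]
      have := le_max_right (u - L) (0:ℝ)
      linarith
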